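/- Let m ≡ 0 (mod 4), n = 2m, and u ∈ GF(2^n) \ GF(2^m) with u^(2^m+1) = 1; set w = u + u^(2^m). Then w^2 + w + 1 ≠ 0. -/

import Mathlib

/-- Let `m ≡ 0 (mod 4)`, `n = 2m`, and `u ∈ GF(2^n) \ GF(2^m)` with `u^(2^m+1) = 1`;
set `w = u + u^(2^m)`. Then `w² + w + 1 ≠ 0`. -/
theorem stmt_15 (m : ℕ) (hm0 : 0 < m) (hm : m % 4 = 0) (F : Type*) [Field F] [Fintype F]
    (hcard : Fintype.card F = 2 ^ (2 * m))
    (u : F) (hu : u ^ (2 ^ m) ≠ u) (hu1 : u ^ (2 ^ m + 1) = 1)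
    (w : F) (hw : w = u + u ^ (2 ^ m)) :
    w ^ 2 + w + 1 ≠ 0 := by
  intro h
  -- characteristic 2
  have h2 : (2 : F) = 0 := by
    obtain ⟨n, hp, hc⟩ := FiniteField.card F (ringChar F)
    have : ringChar F ∣ 2 := by
      have hdvd : ringChar F ∣ 2 ^ (2 * m) := by
        rw [← hcard, hc]
        exact dvd_pow_self _ (by positivity)
      exact hp.dvd_of_dvd_pow hdvd
    have h2' : ringChar F = 2 := ((Nat.prime_dvd_prime_iff_eq hp Nat.prime_two).mp this)
    have := ringChar.eq_iff.mp h2'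
    exact CharTwo.two_eq_zero
  have hu0 : u ≠ 0 := by
    intro h0
    rw [h0, zero_pow (by positivity)] at hu1
    exact zero_ne_one hu1
  have hinv : u ^ (2 ^ m) = u⁻¹ := by
    have h1 := hu1
    rw [pow_succ] at h1
    exact eq_inv_of_mul_eq_one_left h1
  -- u^5 = 1
  have h5 : u ^ 5 = 1 := by
    have key : u ^ 4 + u ^ 3 + u ^ 2 + u + 1 = 0 := by
      rw [hw, hinv] at h
      have e : (u + u⁻¹) ^ 2 + (u + u⁻¹) + 1 = (u ^ 4 + u ^ 3 + u ^ 2 + u + 1) / u ^ 2 := by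
        field_simp
        ring_nf
        linear_combination u ^ 2 * h2
      rw [e] at h
      field_simp at h
      linear_combination h
    linear_combination (u - 1) * key
  -- 5 ∣ 2^m - 1
  obtain ⟨k, hk⟩ := Nat.dvd_of_mod_eq_zero hm
  have h5d : 5 ∣ 2 ^ m - 1 := by
    have h15 : 15 ∣ 16 ^ k - 1 ^ k := Nat.sub_dvd_pow_sub_pow 16 1 k
    simp only [one_pow] at h15
    have h16 : (16 : ℕ) ^ k = 2 ^ m := by rw [hk, pow_mul]; norm_num
    rw [h16] at h15
    exact dvd_trans (by norm_num) h15
  obtain ⟨j, hj⟩ := h5d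
  apply hu
  have h1 : 1 ≤ 2 ^ m := Nat.one_le_two_pow
  have hsplit : u ^ (2 ^ m) = u ^ (2 ^ m - 1) * u := by
    rw [← pow_succ]
    congr 1
    omega
  rw [hsplit, hj, pow_mul, h5, one_pow, one_mul]
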